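/- If G is a finitely generated group not containing a free subsemigroup of rank 2, and H is a normal subgroup of G with G/H solvable, then H is finitely generated. -/

import Mathlib

open Subgroup



/-- The letter-substitution function. -/
def nfsF {K : Type*} (x y : K) : Bool → K := fun b => bif b then x else y

/-- "No free subsemigroup", in terms of relations between positive words. -/
def NFS (K : Type*) [Group K] : Prop :=
  ∀ x y : K, ∃ l₁ l₂ : List Bool, l₁ ≠ l₂ ∧
    (l₁.map (nfsF x y)).prod = (l₂.map (nfsF x y)).prod

theorem freeSemigroup_lift_eq_prod {K : Type*} [Group K] (f : Bool → K)
    (w : FreeSemigroup Bool) :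
    FreeSemigroup.lift f w = ((w.head :: w.tail).map f).prod := by
  obtain ⟨h, l⟩ := w
  induction l generalizing h with
  | nil => simp [FreeSemigroup.lift]
  | cons b s ih =>
      have : (⟨h, b :: s⟩ : FreeSemigroup Bool) = FreeSemigroup.of h * ⟨b, s⟩ := rfl
      rw [this, map_mul, FreeSemigroup.lift_of, ih]
      simp

theorem nfs_of_hnofree {G : Type*} [Group G]
    (hnofree : ∀ φ : FreeSemigroup Bool →ₙ* G, ¬ Function.Injective φ) : NFS G := by
  intro x y
  obtain ⟨w₁, w₂, heq, hne⟩ :=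
    Function.not_injective_iff.mp (hnofree (FreeSemigroup.lift (nfsF x y)))
  refine ⟨w₁.head :: w₁.tail, w₂.head :: w₂.tail, ?_, ?_⟩
  · intro h
    apply hne
    injection h with h1 h2
    exact FreeSemigroup.ext h1 h2
  · rw [← freeSemigroup_lift_eq_prod, ← freeSemigroup_lift_eq_prod]
    exact heq

theorem nfs_subgroup {K : Type*} [Group K] (h : NFS K) (T : Subgroup K) : NFS ↥T := by
  intro x y
  obtain ⟨l₁, l₂, hne, heq⟩ := h ↑x ↑y
  refine ⟨l₁, l₂, hne, ?_⟩
  apply Subtype.coe_injective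
  have key : ∀ l : List Bool,
      T.subtype (l.map (nfsF x y)).prod = (l.map (nfsF (x : K) (y : K))).prod := by
    intro l
    rw [map_list_prod T.subtype, List.map_map]
    congr 1
    apply List.map_congr_left
    intro b _
    cases b <;> simp [nfsF]
  show T.subtype _ = T.subtype _
  rw [key, key, heq]

/-- two distinct lists of equal length split at their first difference. -/
theorem list_split_first {α : Type*} :
    ∀ (u v : List α), u.length = v.length → u ≠ v →
      ∃ (c u' v' : List α) (x y : α), x ≠ y ∧ u'.length = v'.length ∧
        u = c ++ x :: u' ∧ v = c ++ y :: v' := by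
  intro u
  induction u with
  | nil =>
      intro v hlen hne
      cases v with
      | nil => exact absurd rfl hne
      | cons b s => simp at hlen
  | cons a s ih =>
      intro v hlen hne
      cases v with
      | nil => simp at hlen
      | cons b t =>
          by_cases hab : a = b
          · subst hab
            have hst : s ≠ t := by
              intro h; exact hne (by rw [h])
            obtain ⟨c, u', v', x, y, hxy, hl, hu, hv⟩ :=
              ih t (by simpa using hlen) hst
            exact ⟨a :: c, u', v', x, y, hxy, hl, by simp [hu], by simp [hv]⟩
          · exact ⟨[], s, t, a, b, hab, by simpa using hlen, rfl, rfl⟩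

/-- two distinct lists of equal length split at their last difference. -/
theorem list_split_last {α : Type*} (u v : List α) (hlen : u.length = v.length)
    (hne : u ≠ v) :
    ∃ (c u' v' : List α) (x y : α), x ≠ y ∧ u'.length = v'.length ∧
      u = u' ++ x :: c ∧ v = v' ++ y :: c := by
  have hne' : u.reverse ≠ v.reverse := fun h => hne (by
    simpa using congrArg List.reverse h)
  obtain ⟨c, u', v', x, y, hxy, hl, hu, hv⟩ :=
    list_split_first u.reverse v.reverse (by simpa using hlen) hne'
  refine ⟨c.reverse, u'.reverse, v'.reverse, x, y, hxy, by simpa using hl, ?_, ?_⟩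
  · have := congrArg List.reverse hu
    simpa using this
  · have := congrArg List.reverse hv
    simpa using this

def Efun {K : Type*} [Group K] (t a : K) : List Bool → K
  | [] => 1
  | b :: s => (bif b then a else 1) * (t * Efun t a s * t⁻¹)

theorem prod_eq_Efun {K : Type*} [Group K] (t a : K) :
    ∀ l : List Bool, (l.map (nfsF (a * t) t)).prod = Efun t a l * t ^ l.length := by
  intro l
  induction l with
  | nil => simp [Efun]
  | cons b s ih =>
      rw [List.map_cons, List.prod_cons, ih]
      cases b <;> simp [Efun, nfsF, pow_succ] <;> group

theorem Efun_mem {K : Type*} [Group K] (t a : K) :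
    ∀ l : List Bool,
      Efun t a l ∈ closure ((fun i : ℕ => t ^ i * a * (t ^ i)⁻¹) '' Set.Iio l.length) := by
  intro l
  induction l with
  | nil => exact one_mem _
  | cons b s ih =>
      have h1 : (bif b then a else 1) ∈
          closure ((fun i : ℕ => t ^ i * a * (t ^ i)⁻¹) '' Set.Iio (b :: s).length) := by
        cases b
        · exact one_mem _
        · refine subset_closure ⟨0, by simp, by simp⟩
      have h2 : t * Efun t a s * t⁻¹ ∈
          closure ((fun i : ℕ => t ^ i * a * (t ^ i)⁻¹) '' Set.Iio (b :: s).length) := by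
        have hmap := Subgroup.mem_map_of_mem (MulAut.conj t).toMonoidHom ih
        rw [MonoidHom.map_closure] at hmap
        refine closure_mono ?_ hmap
        rintro z ⟨w, ⟨i, hi, rfl⟩, rfl⟩
        refine ⟨i + 1, ?_, ?_⟩
        · simp only [Set.mem_Iio] at hi ⊢
          simpa using Nat.succ_lt_succ hi
        · simp only [MulEquiv.coe_toMonoidHom, MulAut.conj_apply]
          rw [pow_succ]
          group
      have := mul_mem h1 h2
      simpa [Efun] using this

/-- Extraction: a relation between positive words in `a*t, t` yields that some conjugate
`t^m a t^{-m}` lies in the group generated by the earlier conjugates. -/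
theorem extraction {K Q : Type*} [Group K] [Group Q] (π : K →* Q) (t a : K)
    (hti : ∀ n : ℤ, π t ^ n = 1 → n = 0) (ha : π a = 1)
    (l₁ l₂ : List Bool) (hne : l₁ ≠ l₂)
    (heq : (l₁.map (nfsF (a * t) t)).prod = (l₂.map (nfsF (a * t) t)).prod) :
    ∃ m : ℕ, t ^ m * a * (t ^ m)⁻¹ ∈
      closure ((fun i : ℕ => t ^ i * a * (t ^ i)⁻¹) '' Set.Iio m) := by
  -- the two words have equal length
  have hπ : ∀ l : List Bool, π (l.map (nfsF (a * t) t)).prod = π t ^ l.length := by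
    intro l
    induction l with
    | nil => simp
    | cons b s ih =>
        rw [List.map_cons, List.prod_cons, map_mul, ih]
        have hb : π (nfsF (a * t) t b) = π t := by
          cases b <;> simp [nfsF, map_mul, ha]
        rw [hb, List.length_cons, pow_succ']
  have hlen : l₁.length = l₂.length := by
    have h := congrArg π heq
    rw [hπ, hπ] at h
    have : π t ^ ((l₁.length : ℤ) - (l₂.length : ℤ)) = 1 := by
      rw [zpow_sub, zpow_natCast, zpow_natCast, h, mul_inv_cancel]
    have := hti _ this
    omega
  obtain ⟨c, u', v', x, y, hxy, hl, hu, hv⟩ := list_split_last l₁ l₂ hlen hne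
  -- from the relation, Φ(u') * f x = Φ(v') * f y
  have hcancel : (u'.map (nfsF (a * t) t)).prod * nfsF (a * t) t x
      = (v'.map (nfsF (a * t) t)).prod * nfsF (a * t) t y := by
    rw [hu, hv] at heq
    simp only [List.map_append, List.prod_append, List.map_cons, List.prod_cons] at heq
    rw [← mul_assoc, ← mul_assoc] at heq
    exact mul_right_cancel heq
  -- reduce both (x,y) cases to a symmetric computation
  have main : ∀ p q : List Bool, p.length = q.length →
      (p.map (nfsF (a * t) t)).prod * (a * t) = (q.map (nfsF (a * t) t)).prod * t →
      ∃ m : ℕ, t ^ m * a * (t ^ m)⁻¹ ∈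
        closure ((fun i : ℕ => t ^ i * a * (t ^ i)⁻¹) '' Set.Iio m) := by
    intro p q hpq h
    refine ⟨p.length, ?_⟩
    rw [prod_eq_Efun, prod_eq_Efun, ← hpq] at h
    set m := p.length with hm
    set P := Efun t a p with hP
    set Qe := Efun t a q with hQ
    -- h : P * t ^ m * (a * t) = Qe * t ^ m * t
    have h2 : P * t ^ m * a = Qe * t ^ m := by
      apply mul_right_cancel (b := t)
      calc P * t ^ m * a * t = P * t ^ m * (a * t) := by group
        _ = Qe * t ^ m * t := h
    have ha' : t ^ m * a * (t ^ m)⁻¹ = P⁻¹ * Qe := by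
      apply mul_right_cancel (b := t ^ m)
      apply mul_left_cancel (a := P)
      calc P * (t ^ m * a * (t ^ m)⁻¹ * t ^ m) = P * t ^ m * a := by group
        _ = Qe * t ^ m := h2
        _ = P * (P⁻¹ * Qe * t ^ m) := by group
    rw [ha']
    exact mul_mem (inv_mem (Efun_mem t a p)) (by
      have := Efun_mem t a q
      rwa [← hpq] at this)
  cases x <;> cases y
  · exact absurd rfl hxy
  · exact main v' u' hl.symm (by simpa [nfsF] using hcancel.symm)
  · exact main u' v' hl (by simpa [nfsF] using hcancel)
  · exact absurd rfl hxy
theorem conj_closure_le {K : Type*} [Group K] (g : K) (S : Set K) (T : Subgroup K)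
    (h : ∀ x ∈ S, g * x * g⁻¹ ∈ T) : ∀ x ∈ closure S, g * x * g⁻¹ ∈ T := by
  intro x hx
  have hmap := Subgroup.mem_map_of_mem (MulAut.conj g).toMonoidHom hx
  rw [MonoidHom.map_closure] at hmap
  have hsub : (⇑(MulAut.conj g).toMonoidHom '' S) ⊆ (T : Set K) := by
    rintro z ⟨w, hw, rfl⟩
    simpa [MulAut.conj_apply] using h w hw
  have := (closure_le T).mpr hsub hmap
  simpa [MulAut.conj_apply] using this

theorem conj_zpow_mem {K : Type*} [Group K] (t : K) (F : Subgroup K)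
    (h1 : ∀ x ∈ F, t * x * t⁻¹ ∈ F) (h2 : ∀ x ∈ F, t⁻¹ * x * t ∈ F) :
    ∀ (n : ℤ), ∀ x ∈ F, t ^ n * x * (t ^ n)⁻¹ ∈ F := by
  intro n
  induction n using Int.induction_on with
  | zero => intro x hx; simpa using hx
  | succ k ih =>
      intro x hx
      have key : t ^ ((k : ℤ) + 1) * x * (t ^ ((k : ℤ) + 1))⁻¹
          = t ^ (k : ℤ) * (t * x * t⁻¹) * (t ^ (k : ℤ))⁻¹ := by
        rw [zpow_add_one]; group
      rw [key]
      exact ih _ (h1 x hx)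
  | pred k ih =>
      intro x hx
      have key : t ^ (-(k : ℤ) - 1) * x * (t ^ (-(k : ℤ) - 1))⁻¹
          = t ^ (-(k : ℤ)) * (t⁻¹ * x * t) * (t ^ (-(k : ℤ)))⁻¹ := by
        rw [zpow_sub_one]; group
      rw [key]
      exact ih _ (h2 x hx)

/-- If some positive conjugate and some negative conjugate of `a` by powers of `t`
lie in the subgroup generated by the intermediate conjugates, then the subgroup
generated by all conjugates `t^n a t^{-n}` is finitely generated. -/
theorem conjFG {K : Type*} [Group K] (t a : K)
    (hp : ∃ m : ℤ, 0 < m ∧ t ^ m * a * (t ^ m)⁻¹ ∈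
      closure ((fun n : ℤ => t ^ n * a * (t ^ n)⁻¹) '' Set.Ico 0 m))
    (hm : ∃ m : ℤ, m < 0 ∧ t ^ m * a * (t ^ m)⁻¹ ∈
      closure ((fun n : ℤ => t ^ n * a * (t ^ n)⁻¹) '' Set.Ioc m 0)) :
    (closure (Set.range (fun n : ℤ => t ^ n * a * (t ^ n)⁻¹))).FG := by
  set d : ℤ → K := fun n => t ^ n * a * (t ^ n)⁻¹ with hd
  obtain ⟨mp, hmp, hmem_p⟩ := hp
  obtain ⟨mm, hmm, hmem_m⟩ := hm
  set F : Subgroup K := closure (d '' Set.Ioo mm mp) with hF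
  have dconj : ∀ i : ℤ, t * d i * t⁻¹ = d (i + 1) := by
    intro i; simp only [hd, zpow_add, zpow_one]; group
  have dconj' : ∀ i : ℤ, t⁻¹ * d i * t = d (i - 1) := by
    intro i; simp only [hd, zpow_sub, zpow_one]; group
  have hIcosub : Set.Ico (0:ℤ) mp ⊆ Set.Ioo mm mp := fun x hx =>
    ⟨lt_of_lt_of_le hmm hx.1, hx.2⟩
  have hIocsub : Set.Ioc mm (0:ℤ) ⊆ Set.Ioo mm mp := fun x hx =>
    ⟨hx.1, lt_of_le_of_lt hx.2 hmp⟩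
  have conj_le : ∀ x ∈ F, t * x * t⁻¹ ∈ F := by
    apply conj_closure_le
    rintro z ⟨i, hi, rfl⟩
    simp only [Set.mem_Ioo] at hi
    rw [dconj]
    rcases lt_or_eq_of_le (Int.add_one_le_iff.mpr hi.2) with h | h
    · exact subset_closure ⟨i + 1, ⟨by omega, h⟩, rfl⟩
    · rw [h]
      exact closure_mono (Set.image_mono (f := d) hIcosub) hmem_p
  have conj_le' : ∀ x ∈ F, t⁻¹ * x * t ∈ F := by
    have := conj_closure_le t⁻¹ (d '' Set.Ioo mm mp) F ?_
    · simpa using this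
    rintro z ⟨i, hi, rfl⟩
    simp only [Set.mem_Ioo] at hi
    rw [inv_inv, dconj']
    rcases lt_or_eq_of_le (Int.le_sub_one_iff.mpr hi.1) with h | h
    · exact subset_closure ⟨i - 1, ⟨by omega, by omega⟩, rfl⟩
    · rw [← h]
      exact closure_mono (Set.image_mono (f := d) hIocsub) hmem_m
  have hall : ∀ n : ℤ, d n ∈ F := by
    intro n
    have h0 : d 0 ∈ F := subset_closure ⟨0, ⟨hmm, hmp⟩, rfl⟩
    have := conj_zpow_mem t F conj_le conj_le' n (d 0) h0
    have hdn : t ^ n * d 0 * (t ^ n)⁻¹ = d n := by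
      simp only [hd, zpow_zero]; group
    rwa [hdn] at this
  have hEq : closure (Set.range d) = F := by
    apply le_antisymm
    · rw [closure_le]
      rintro z ⟨n, rfl⟩
      exact hall n
    · exact closure_mono (Set.image_subset_range d _)
  rw [hEq]
  exact (Subgroup.fg_iff F).mpr ⟨d '' Set.Ioo mm mp, rfl, (Set.finite_Ioo mm mp).image d⟩
theorem fgmap {K L : Type*} [Group K] [Group L] {P : Subgroup K} (h : P.FG) (f : K →* L) :
    (P.map f).FG := by
  obtain ⟨S, hS, hfin⟩ := (Subgroup.fg_iff P).mp h
  refine (Subgroup.fg_iff _).mpr ⟨f '' S, ?_, hfin.image f⟩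
  rw [← MonoidHom.map_closure, hS]

theorem fgsup {K : Type*} [Group K] {P Q : Subgroup K} (hP : P.FG) (hQ : Q.FG) :
    (P ⊔ Q).FG := by
  obtain ⟨S, hS, hSf⟩ := (Subgroup.fg_iff P).mp hP
  obtain ⟨T, hT, hTf⟩ := (Subgroup.fg_iff Q).mp hQ
  refine (Subgroup.fg_iff _).mpr ⟨S ∪ T, ?_, hSf.union hTf⟩
  rw [Subgroup.closure_union, hS, hT]

theorem fg_closure_biUnion {K : Type*} [Group K] {ι : Type*} (S : Finset ι)
    (A : ι → Set K) (hA : ∀ s ∈ S, (closure (A s)).FG) :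
    (closure (⋃ s ∈ S, A s)).FG := by
  classical
  revert hA
  induction S using Finset.induction_on with
  | empty =>
      intro _
      refine (Subgroup.fg_iff _).mpr ⟨∅, by simp, Set.finite_empty⟩
  | insert a s hnotmem ih =>
      intro hA
      rw [Finset.set_biUnion_insert, Subgroup.closure_union]
      exact fgsup (hA a (Finset.mem_insert_self a s))
        (ih fun x hx => hA x (Finset.mem_insert_of_mem hx))

/-- Milnor's lemma: in a finitely generated group with no free subsemigroup, a normal
subgroup with cyclic quotient (generated by the image of `t`) is finitely generated. -/
theorem key {K : Type*} [Group K] (hfg : Group.FG K) (hnfs : NFS K) (t : K)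
    (M : Subgroup K) [hMn : M.Normal]
    (hgen : ∀ k : K, ∃ (n : ℤ) (m : K), m ∈ M ∧ k = t ^ n * m) : M.FG := by
  by_cases hord : ∃ n : ℤ, n ≠ 0 ∧ t ^ n ∈ M
  · -- finite cyclic quotient: Schreier's lemma
    obtain ⟨n, hn0, hnM⟩ := hord
    set π := QuotientGroup.mk' M with hπ
    have hfo : IsOfFinOrder (π t) := by
      refine isOfFinOrder_iff_pow_eq_one.mpr ⟨n.natAbs, by omega, ?_⟩
      have h1 : π t ^ (n : ℤ) = 1 := by
        rw [← map_zpow, hπ]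
        rwa [QuotientGroup.mk'_apply, QuotientGroup.eq_one_iff]
      have : π t ^ ((n.natAbs : ℤ)) = 1 := by
        rcases Int.natAbs_eq n with h | h
        · rw [← h, h1]
        · rw [← neg_neg ((n.natAbs : ℤ)), ← h, zpow_neg, h1, inv_one]
      exact_mod_cast this
    have hsurj : ∀ q : K ⧸ M, q ∈ Subgroup.zpowers (π t) := by
      intro q
      obtain ⟨k, rfl⟩ := QuotientGroup.mk'_surjective M q
      obtain ⟨p, m, hm, rfl⟩ := hgen k
      refine ⟨p, ?_⟩
      have hm1 : π m = 1 := by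
        rw [hπ, QuotientGroup.mk'_apply, QuotientGroup.eq_one_iff]; exact hm
      show π t ^ p = π (t ^ p * m)
      rw [map_mul, map_zpow, hm1, mul_one]
    have hQfin : Finite (K ⧸ M) := by
      rw [← Set.finite_univ_iff]
      refine Set.Finite.subset ?_ (fun q _ => hsurj q)
      rw [← hfo.powers_eq_zpowers]
      exact hfo.finite_powers
    haveI := hQfin
    haveI : M.FiniteIndex := M.finiteIndex_of_finite_quotient
    haveI := hfg
    exact (Group.fg_iff_subgroup_fg M).mp M.fg_of_index_ne_zero
  · -- infinite cyclic quotient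
    push_neg at hord
    have hord' : ∀ p : ℤ, t ^ p ∈ M → p = 0 := by
      intro p hp
      by_contra h
      exact (hord p h) hp
    set π := QuotientGroup.mk' M with hπ
    have hmem_one : ∀ x : K, π x = 1 ↔ x ∈ M := by
      intro x; rw [hπ, QuotientGroup.mk'_apply, QuotientGroup.eq_one_iff]
    have hti : ∀ n : ℤ, π t ^ n = 1 → n = 0 := by
      intro n hn
      apply hord'
      rw [← hmem_one, map_zpow, hn]
    -- the subgroup generated by all t-conjugates of a fixed element of M is f.g.
    have LFG : ∀ a ∈ M, (closure (Set.range (fun n : ℤ => t ^ n * a * (t ^ n)⁻¹))).FG := by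
      intro a haM
      by_cases ha1 : a = 1
      · refine (Subgroup.fg_iff _).mpr ⟨_, rfl, ?_⟩
        have : Set.range (fun n : ℤ => t ^ n * a * (t ^ n)⁻¹) = {1} := by
          ext z; simp [ha1]
        rw [this]; exact Set.finite_singleton 1
      have haπ : π a = 1 := (hmem_one a).mpr haM
      -- positive side
      obtain ⟨l₁, l₂, hne, heq⟩ := hnfs (a * t) t
      obtain ⟨mp, hmemp⟩ := extraction π t a hti haπ l₁ l₂ hne heq
      -- negative side
      have hti' : ∀ n : ℤ, π t⁻¹ ^ n = 1 → n = 0 := by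
        intro n hn
        have h1 : π t ^ (-n) = 1 := by
          rw [zpow_neg, ← inv_zpow, ← map_inv]; exact hn
        have := hti (-n) h1
        omega
      obtain ⟨l₃, l₄, hne', heq'⟩ := hnfs (a * t⁻¹) t⁻¹
      obtain ⟨mm, hmemm⟩ := extraction π t⁻¹ a hti' haπ l₃ l₄ hne' heq'
      -- mp, mm are positive since a ≠ 1
      have hmp0 : 0 < mp := by
        rcases Nat.eq_zero_or_pos mp with h | h
        · subst h
          have hempty : ((fun i : ℕ => t ^ i * a * (t ^ i)⁻¹) '' Set.Iio 0) = ∅ := by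
            ext z; simp
          rw [hempty, Subgroup.closure_empty, Subgroup.mem_bot] at hmemp
          exact absurd (by simpa using hmemp) ha1
        · exact h
      have hmm0 : 0 < mm := by
        rcases Nat.eq_zero_or_pos mm with h | h
        · subst h
          have hempty : ((fun i : ℕ => (t⁻¹) ^ i * a * ((t⁻¹) ^ i)⁻¹) '' Set.Iio 0) = ∅ := by
            ext z; simp
          rw [hempty, Subgroup.closure_empty, Subgroup.mem_bot] at hmemm
          exact absurd (by simpa using hmemm) ha1
        · exact h
      apply conjFG
      · refine ⟨(mp : ℤ), by exact_mod_cast hmp0, ?_⟩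
        have hset : ((fun i : ℕ => t ^ i * a * (t ^ i)⁻¹) '' Set.Iio mp) ⊆
            ((fun n : ℤ => t ^ n * a * (t ^ n)⁻¹) '' Set.Ico 0 (mp : ℤ)) := by
          rintro z ⟨i, hi, rfl⟩
          refine ⟨(i : ℤ), ⟨Int.ofNat_nonneg i, by exact_mod_cast hi⟩, ?_⟩
          show t ^ ((i : ℤ)) * a * (t ^ ((i : ℤ)))⁻¹ = t ^ i * a * (t ^ i)⁻¹
          rw [zpow_natCast]
        have := closure_mono hset hmemp
        rwa [zpow_natCast]
      · refine ⟨-(mm : ℤ), by omega, ?_⟩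
        have hpow : ∀ i : ℕ, (t⁻¹) ^ i = t ^ (-(i : ℤ)) := by
          intro i
          rw [zpow_neg, ← inv_zpow, zpow_natCast]
        have hset : ((fun i : ℕ => (t⁻¹) ^ i * a * ((t⁻¹) ^ i)⁻¹) '' Set.Iio mm) ⊆
            ((fun n : ℤ => t ^ n * a * (t ^ n)⁻¹) '' Set.Ioc (-(mm : ℤ)) 0) := by
          rintro z ⟨i, hi, rfl⟩
          refine ⟨-(i : ℤ), ⟨by simp only [Set.mem_Iio] at hi; omega, by omega⟩, ?_⟩
          show t ^ (-(i : ℤ)) * a * (t ^ (-(i : ℤ)))⁻¹ = (t⁻¹) ^ i * a * ((t⁻¹) ^ i)⁻¹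
          rw [← hpow]
        have := closure_mono hset hmemm
        rwa [hpow mm] at this
    -- assemble
    obtain ⟨S, hStop, hSfin⟩ := Group.fg_iff.mp hfg
    choose e w hwM hwEq using hgen
    set U : Set K := ⋃ s ∈ S, Set.range (fun n : ℤ => t ^ n * w s * (t ^ n)⁻¹) with hU
    set M₀ : Subgroup K := closure U with hM₀
    have hM₀fg : M₀.FG := by
      have := fg_closure_biUnion hSfin.toFinset
        (fun s => Set.range (fun n : ℤ => t ^ n * w s * (t ^ n)⁻¹))
        (fun s _ => LFG (w s) (hwM s))
      have hUeq : (⋃ s ∈ hSfin.toFinset, Set.range (fun n : ℤ => t ^ n * w s * (t ^ n)⁻¹)) = U := by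
        rw [hU]
        ext z
        simp [Set.Finite.mem_toFinset]
      rwa [hUeq] at this
    have hM₀M : M₀ ≤ M := by
      rw [hM₀, closure_le]
      rintro z hz
      simp only [hU, Set.mem_iUnion] at hz
      obtain ⟨s, hs, n, rfl⟩ := hz
      exact hMn.conj_mem (w s) (hwM s) (t ^ n)
    have hconj : ∀ (p : ℤ), ∀ x ∈ M₀, t ^ p * x * (t ^ p)⁻¹ ∈ M₀ := by
      intro p
      apply conj_closure_le
      rintro z hz
      simp only [hU, Set.mem_iUnion] at hz
      obtain ⟨s, hs, n, rfl⟩ := hz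
      have : t ^ p * (t ^ n * w s * (t ^ n)⁻¹) * (t ^ p)⁻¹
          = t ^ (p + n) * w s * (t ^ (p + n))⁻¹ := by
        rw [zpow_add]; group
      rw [this]
      apply Subgroup.subset_closure
      simp only [hU, Set.mem_iUnion]
      exact ⟨s, hs, p + n, rfl⟩
    -- the set of elements t^n x with x ∈ M₀ is a subgroup containing the generators
    set W : Subgroup K :=
      { carrier := {k : K | ∃ n : ℤ, ∃ x ∈ M₀, k = t ^ n * x}
        one_mem' := ⟨0, 1, one_mem _, by simp⟩
        mul_mem' := by
          rintro k₁ k₂ ⟨n, x, hx, rfl⟩ ⟨p, y, hy, rfl⟩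
          refine ⟨n + p, (t ^ p)⁻¹ * x * t ^ p * y, mul_mem ?_ hy, ?_⟩
          · have := hconj (-p) x hx
            rwa [zpow_neg, inv_inv] at this
          · rw [zpow_add]; group
        inv_mem' := by
          rintro k ⟨n, x, hx, rfl⟩
          refine ⟨-n, t ^ n * x⁻¹ * (t ^ n)⁻¹, hconj n x⁻¹ (inv_mem hx), ?_⟩
          rw [zpow_neg]; group } with hW
    have hWtop : (⊤ : Subgroup K) ≤ W := by
      rw [← hStop, closure_le]
      intro s hs
      refine ⟨e s, w s, ?_, hwEq s⟩
      apply Subgroup.subset_closure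
      simp only [hU, Set.mem_iUnion]
      exact ⟨s, hs, 0, by simp⟩
    have hMM₀ : M ≤ M₀ := by
      intro m hm
      obtain ⟨n, x, hx, hmx⟩ := hWtop (Subgroup.mem_top m)
      have hxM : x ∈ M := hM₀M hx
      have : t ^ n ∈ M := by
        have : t ^ n = m * x⁻¹ := by rw [hmx]; group
        rw [this]; exact mul_mem hm (inv_mem hxM)
      have hn0 : n = 0 := hord' n this
      subst hn0
      simp only [zpow_zero, one_mul] at hmx
      rwa [hmx]
    have : M = M₀ := le_antisymm hMM₀ hM₀M
    rw [this]
    exact hM₀fg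
theorem normal_of_comm {K : Type*} [Group K] (M N : Subgroup K)
    (hM : ∀ x y : K, x * y * x⁻¹ * y⁻¹ ∈ M) (hMN : M ≤ N) : N.Normal := by
  constructor
  intro n hn g
  have h1 : g * n * g⁻¹ * n⁻¹ ∈ N := hMN (hM g n)
  have h2 : g * n * g⁻¹ = g * n * g⁻¹ * n⁻¹ * n := by group
  rw [h2]
  exact mul_mem h1 hn

theorem normal_subgroupOf' {K : Type*} [Group K] {N T : Subgroup K} (hN : N.Normal) :
    (N.subgroupOf T).Normal := by
  constructor
  intro n hn g
  rw [Subgroup.mem_subgroupOf] at hn ⊢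
  simpa using hN.conj_mem _ hn ↑g

/-- Milnor's lemma applied along a chain: if `K/M` is abelian (all commutators lie in `M`)
and `M` together with finitely many elements generates a f.g. subgroup, then `M` is f.g. -/
theorem abelianized_step {K : Type*} [Group K] (hnfs : NFS K) (M : Subgroup K)
    (hM : ∀ x y : K, x * y * x⁻¹ * y⁻¹ ∈ M) :
    ∀ l : List K, (M ⊔ closure {x | x ∈ l}).FG → M.FG := by
  intro l
  induction l with
  | nil =>
      intro h
      have hempty : {x : K | x ∈ ([] : List K)} = ∅ := by ext; simp
      rwa [hempty, Subgroup.closure_empty, sup_bot_eq] at h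
  | cons g l ih =>
      intro hTfg
      set N : Subgroup K := M ⊔ closure {x | x ∈ l} with hN
      set T : Subgroup K := M ⊔ closure {x | x ∈ g :: l} with hTdef
      have hsetins : {x : K | x ∈ g :: l} = insert g {x | x ∈ l} := by ext; simp
      have hNnormal : N.Normal := normal_of_comm M N hM le_sup_left
      haveI := hNnormal
      have hTN : T = N ⊔ Subgroup.zpowers g := by
        rw [hTdef, hsetins, Set.insert_eq, Subgroup.closure_union,
          Subgroup.zpowers_eq_closure, hN]
        rw [sup_comm (Subgroup.closure ({g} : Set K)) (Subgroup.closure {x | x ∈ l}),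
          ← sup_assoc]
      have hgT : g ∈ T := by
        rw [hTN]
        exact Subgroup.mem_sup_right (Subgroup.mem_zpowers g)
      have hNT : N ≤ T := by rw [hTN]; exact le_sup_left
      haveI : Group.FG ↥T := (Group.fg_iff_subgroup_fg T).mpr hTfg
      set tT : ↥T := ⟨g, hgT⟩ with htT
      set M' : Subgroup ↥T := N.subgroupOf T with hM'
      haveI : M'.Normal := normal_subgroupOf' hNnormal
      have hgen : ∀ k : ↥T, ∃ (n : ℤ) (m : ↥T), m ∈ M' ∧ k = tT ^ n * m := by
        intro k
        have hk : (k : K) ∈ ((Subgroup.zpowers g ⊔ N : Subgroup K) : Set K) := by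
          rw [sup_comm, ← hTN]; exact k.2
        rw [Subgroup.mul_normal (Subgroup.zpowers g) N] at hk
        obtain ⟨h, hh, m, hm, hmul⟩ := hk
        obtain ⟨p, hp⟩ := Subgroup.mem_zpowers_iff.mp hh
        have hmT : m ∈ T := hNT hm
        refine ⟨p, ⟨m, hmT⟩, Subgroup.mem_subgroupOf.mpr hm, ?_⟩
        apply Subtype.ext
        have hcoe : ((tT ^ p * (⟨m, hmT⟩ : ↥T) : ↥T) : K) = g ^ p * m := by
          simp [htT]
        show (k : K) = ((tT ^ p * (⟨m, hmT⟩ : ↥T) : ↥T) : K)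
        rw [hcoe, hp]
        exact hmul.symm
      have hM'fg : M'.FG := key inferInstance (nfs_subgroup hnfs T) tT M' hgen
      have hNfg : N.FG := by
        have hmap := fgmap hM'fg T.subtype
        rwa [Subgroup.subgroupOf_map_subtype, inf_eq_left.mpr hNT] at hmap
      exact ih hNfg

open scoped commutatorElement

theorem solvstep : ∀ (n : ℕ) (K : Type*) [Group K] (_ : Group.FG K) (_ : NFS K)
    (H : Subgroup K) (_ : H.Normal), derivedSeries (K ⧸ H) n = ⊥ → H.FG := by
  intro n
  induction n with
  | zero =>
      intro K _ hfg hnfs H hHn hds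
      haveI := hHn
      rw [derivedSeries_zero] at hds
      have hHtop : H = ⊤ := by
        rw [eq_top_iff]
        intro k _
        have h1 : (QuotientGroup.mk k : K ⧸ H) ∈ (⊤ : Subgroup (K ⧸ H)) :=
          Subgroup.mem_top _
        rw [hds] at h1
        exact (QuotientGroup.eq_one_iff k).mp (Subgroup.mem_bot.mp h1)
      rw [hHtop]
      exact Group.fg_def.mp hfg
  | succ n ih =>
      intro K _ hfg hnfs H hHn hds
      haveI := hHn
      set C : Subgroup K := H ⊔ _root_.commutator K with hC
      have hCcomm : ∀ x y : K, x * y * x⁻¹ * y⁻¹ ∈ C := by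
        intro x y
        have h1 : ⁅x, y⁆ ∈ _root_.commutator K := by
          rw [_root_.commutator_def K]
          exact Subgroup.commutator_mem_commutator (Subgroup.mem_top x) (Subgroup.mem_top y)
        have h2 : x * y * x⁻¹ * y⁻¹ = ⁅x, y⁆ := by rw [commutatorElement_def]
        rw [h2]
        exact Subgroup.mem_sup_right h1
      have hCfg : C.FG := by
        obtain ⟨S, hStop⟩ := hfg.out
        apply abelianized_step hnfs C hCcomm S.toList
        have hset : {x : K | x ∈ S.toList} = (S : Set K) := by
          ext; simp [Finset.mem_toList]
        rw [hset, hStop, sup_top_eq]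
        exact Group.fg_def.mp hfg
      haveI : Group.FG ↥C := (Group.fg_iff_subgroup_fg C).mpr hCfg
      have hnfsC : NFS ↥C := nfs_subgroup hnfs C
      have hHC : H ≤ C := le_sup_left
      set H' : Subgroup ↥C := H.subgroupOf C with hH'
      haveI hH'n : H'.Normal := normal_subgroupOf' hHn
      set π := QuotientGroup.mk' H with hπ
      set φ : ↥C →* K ⧸ H := π.comp C.subtype with hφ
      have hker : φ.ker = H' := by
        ext x
        rw [MonoidHom.mem_ker, hφ, MonoidHom.comp_apply, hπ, QuotientGroup.mk'_apply,
          QuotientGroup.eq_one_iff]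
        exact (Subgroup.mem_subgroupOf).symm
      have hrange : φ.range = derivedSeries (K ⧸ H) 1 := by
        have h1 : φ.range = Subgroup.map π C := by
          rw [hφ, MonoidHom.range_comp, Subgroup.range_subtype]
        rw [h1, hC, Subgroup.map_sup]
        have h2 : Subgroup.map π H = ⊥ := by
          rw [Subgroup.map_eq_bot_iff, hπ, QuotientGroup.ker_mk']
        have h3 : Subgroup.map π (_root_.commutator K) = commutator (K ⧸ H) := by
          rw [_root_.commutator_def K, _root_.commutator_def (K ⧸ H), Subgroup.map_commutator,
            Subgroup.map_top_of_surjective π (QuotientGroup.mk'_surjective H)]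
        rw [h2, h3, bot_sup_eq, derivedSeries_one]
      have hds' : derivedSeries ↥(derivedSeries (K ⧸ H) 1) n = ⊥ := by
        set D := derivedSeries (K ⧸ H) 1 with hD
        have hle : ∀ j : ℕ, Subgroup.map D.subtype (derivedSeries ↥D j) ≤
            derivedSeries (K ⧸ H) (j + 1) := by
          intro j
          induction j with
          | zero =>
              rw [derivedSeries_zero, ← MonoidHom.range_eq_map, Subgroup.range_subtype]
          | succ j ihj =>
              rw [derivedSeries_succ, Subgroup.map_commutator, derivedSeries_succ]
              exact Subgroup.commutator_mono ihj ihj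
        have hb := hle n
        rw [hds] at hb
        have hbot : Subgroup.map D.subtype (derivedSeries ↥D n) = ⊥ := le_bot_iff.mp hb
        rw [Subgroup.map_eq_bot_iff, Subgroup.ker_subtype, le_bot_iff] at hbot
        exact hbot
      have e : (↥C ⧸ H') ≃* ↥(derivedSeries (K ⧸ H) 1) :=
        ((QuotientGroup.quotientMulEquivOfEq hker.symm).trans
          (QuotientGroup.quotientKerEquivRange φ)).trans (MulEquiv.subgroupCongr hrange)
      have hdsC : derivedSeries (↥C ⧸ H') n = ⊥ := by
        have := map_derivedSeries_eq (f := e.symm.toMonoidHom) e.symm.surjective n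
        rw [← this, hds', Subgroup.map_bot]
      have hH'fg : H'.FG := ih ↥C inferInstance hnfsC H' hH'n hdsC
      have := fgmap hH'fg C.subtype
      rwa [Subgroup.subgroupOf_map_subtype, inf_eq_left.mpr hHC] at this

/-- If `G` is a finitely generated group containing no free subsemigroup of rank 2 and
`H ⊴ G` with `G/H` solvable, then `H` is finitely generated. -/
theorem fg_of_no_free_subsemigroup_of_solvable_quotient {G : Type*} [Group G]
    (hfg : Group.FG G)
    (hnofree : ∀ φ : FreeSemigroup Bool →ₙ* G, ¬ Function.Injective φ)
    (H : Subgroup G) [H.Normal] (hsolv : IsSolvable (G ⧸ H)) :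
    H.FG := by
  obtain ⟨n, hn⟩ := hsolv.solvable
  exact solvstep n G hfg (nfs_of_hnofree hnofree) H inferInstance hn
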